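/- Let c, h, k, t be integers with c ≠ 0, k > 0, t > 0. Let d(x) = c·x^t + h = α·p₁(x) and let g be the constant function g(x) = k/4. Let n, m be positive integers with n ≡ m (mod 2), let a > 0, and let w : ℝ → ℝ be a continuous function with w(x) > 0 for all x ∈ [−a, a]. Then ∫_{−a}^{a} (𝓛ₙ(x) · 𝓛ₘ(x) / w(x)) dx > 0; in particular this integral is nonzero. -/
import Mathlib


/-- Generalized Fibonacci polynomials of Lucas type:
`𝓛₀ = p₀`, `𝓛₁ = p₁`, `𝓛ₙ = d·𝓛ₙ₋₁ + g·𝓛ₙ₋₂` where `d = (2/p₀)·p₁`. -/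
noncomputable def GFPL (p0 : ℝ) (p1 g : ℝ → ℝ) : ℕ → ℝ → ℝ
  | 0 => fun _ => p0
  | 1 => fun x => p1 x
  | n + 2 => fun x =>
      (2 / p0) * p1 x * GFPL p0 p1 g (n + 1) x + g x * GFPL p0 p1 g n x

/-- The polynomial `d(x) = c·x^t + h`. -/
noncomputable def dFun (c h t : ℤ) : ℝ → ℝ := fun x => (c : ℝ) * x ^ t + (h : ℝ)

lemma gfpl_cont (p0 : ℝ) (p1 g : ℝ → ℝ) (h1 : Continuous p1) (hg : Continuous g) :
    ∀ n, Continuous (GFPL p0 p1 g n) := by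
  have key : ∀ n, Continuous (GFPL p0 p1 g n) ∧ Continuous (GFPL p0 p1 g (n + 1)) := by
    intro n
    induction n with
    | zero =>
        refine ⟨?_, ?_⟩
        · show Continuous fun _ => p0
          exact continuous_const
        · show Continuous fun x => p1 x
          exact h1
    | succ k ih =>
        refine ⟨ih.2, ?_⟩
        show Continuous fun x =>
          (2 / p0) * p1 x * GFPL p0 p1 g (k + 1) x + g x * GFPL p0 p1 g k x
        exact ((continuous_const.mul h1).mul ih.2).add (hg.mul ih.1)
  exact fun n => (key n).1

lemma gfpl_key (p0 : ℝ) (hp0 : p0 ≠ 0) (p1 D : ℝ → ℝ)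
    (hp1 : ∀ x, (2 / p0) * p1 x = D x) (gv : ℝ) (hg : 0 < gv) (x : ℝ) :
    ∀ n : ℕ,
      ((n % 2 = 0 → 0 < (2 / p0) * GFPL p0 p1 (fun _ => gv) n x) ∧
       (n % 2 = 1 → ∃ q, 0 < q ∧ (2 / p0) * GFPL p0 p1 (fun _ => gv) n x = D x * q)) := by
  set L : ℕ → ℝ := fun n => (2 / p0) * GFPL p0 p1 (fun _ => gv) n x with hLdef
  have hrec : ∀ j, L (j + 2) = D x * L (j + 1) + gv * L j := by
    intro j
    show (2 / p0) * ((2 / p0) * p1 x * GFPL p0 p1 (fun _ => gv) (j + 1) x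
        + gv * GFPL p0 p1 (fun _ => gv) j x) = _
    rw [← hp1 x]; simp only [hLdef]; ring
  have hL0 : L 0 = 2 := by
    show (2 / p0) * p0 = 2
    field_simp
  have hL1 : L 1 = D x := hp1 x
  set P : ℕ → Prop := fun n =>
    (n % 2 = 0 → 0 < L n) ∧ (n % 2 = 1 → ∃ q, 0 < q ∧ L n = D x * q) with hP
  have main : ∀ n, P n ∧ P (n + 1) := by
    intro n
    induction n with
    | zero =>
        constructor
        · exact ⟨fun _ => by rw [hL0]; norm_num, fun hcon => by omega⟩
        · exact ⟨fun hcon => by omega, fun _ => ⟨1, one_pos, by rw [hL1, mul_one]⟩⟩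
    | succ j ih =>
        refine ⟨ih.2, ?_, ?_⟩
        · intro hj2
          have hj : j % 2 = 0 := by omega
          have hj1 : (j + 1) % 2 = 1 := by omega
          obtain ⟨q, hq, hLq⟩ := ih.2.2 hj1
          have hLj : 0 < L j := ih.1.1 hj
          have := hrec j
          rw [hLq] at this
          nlinarith [sq_nonneg (D x)]
        · intro hj2
          have hj : j % 2 = 1 := by omega
          have hj1 : (j + 1) % 2 = 0 := by omega
          obtain ⟨q, hq, hLq⟩ := ih.1.2 hj
          have hLj1 : 0 < L (j + 1) := ih.2.1 hj1
          refine ⟨L (j + 1) + gv * q, by positivity, ?_⟩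
          rw [hrec j, hLq]; ring
  exact fun n => (main n).1

theorem gfpl_not_orthogonal_same_parity (p0 : ℝ)
    (hp0 : p0 = 1 ∨ p0 = -1 ∨ p0 = 2 ∨ p0 = -2)
    (c h k t : ℤ) (hc : c ≠ 0) (hk : 0 < k) (ht : 0 < t)
    (p1 : ℝ → ℝ) (hp1 : ∀ x, (2 / p0) * p1 x = dFun c h t x)
    (n m : ℕ) (hn : 0 < n) (hm : 0 < m) (hnm : n % 2 = m % 2)
    (a : ℝ) (ha : 0 < a)
    (w : ℝ → ℝ) (hw : Continuous w) (hwpos : ∀ x ∈ Set.Icc (-a) a, 0 < w x) :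
    (0 < ∫ x in (-a)..a,
        GFPL p0 p1 (fun _ => (k : ℝ) / 4) n x *
          GFPL p0 p1 (fun _ => (k : ℝ) / 4) m x / w x) ∧
    (∫ x in (-a)..a,
        GFPL p0 p1 (fun _ => (k : ℝ) / 4) n x *
          GFPL p0 p1 (fun _ => (k : ℝ) / 4) m x / w x) ≠ 0 := by
  have hp0ne : p0 ≠ 0 := by rcases hp0 with h | h | h | h <;> rw [h] <;> norm_num
  have hgpos : (0 : ℝ) < (k : ℝ) / 4 := by positivity
  -- natural-number exponent
  set T : ℕ := t.toNat with hTdef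
  have hT : (T : ℤ) = t := Int.toNat_of_nonneg ht.le
  have hT1 : 1 ≤ T := by omega
  have hdeq : ∀ x : ℝ, dFun c h t x = (c : ℝ) * x ^ T + (h : ℝ) := by
    intro x
    simp only [dFun, ← hT, zpow_natCast]
  -- continuity
  have hdcont : Continuous (dFun c h t) := by
    have : (dFun c h t) = fun x : ℝ => (c : ℝ) * x ^ T + (h : ℝ) := funext hdeq
    rw [this]
    continuity
  have hp1eq : p1 = fun x => (p0 / 2) * dFun c h t x := by
    funext x
    have := hp1 x
    field_simp at this ⊢
    linarith
  have hp1cont : Continuous p1 := by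
    rw [hp1eq]; exact continuous_const.mul hdcont
  have hLncont := gfpl_cont p0 p1 (fun _ => (k : ℝ) / 4) hp1cont continuous_const n
  have hLmcont := gfpl_cont p0 p1 (fun _ => (k : ℝ) / 4) hp1cont continuous_const m
  -- zero set of d is finite
  have hZfin : Set.Finite {x : ℝ | dFun c h t x = 0} := by
    have hq : (Polynomial.C (c : ℝ) * Polynomial.X ^ T + Polynomial.C (h : ℝ)) ≠ 0 := by
      intro hcon
      have hco : (Polynomial.C (c : ℝ) * Polynomial.X ^ T + Polynomial.C (h : ℝ)).coeff T
          = (c : ℝ) := by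
        rw [Polynomial.coeff_add, Polynomial.coeff_C_mul, Polynomial.coeff_X_pow,
          Polynomial.coeff_C, if_pos rfl, if_neg (by omega : ¬ T = 0)]
        ring
      rw [hcon, Polynomial.coeff_zero] at hco
      exact hc (by exact_mod_cast hco.symm)
    refine Set.Finite.subset (Polynomial.finite_setOf_isRoot hq) ?_
    intro x hx
    simp only [Set.mem_setOf_eq, Polynomial.IsRoot, Polynomial.eval_add, Polynomial.eval_mul,
      Polynomial.eval_pow, Polynomial.eval_C, Polynomial.eval_X]
    rw [← hdeq x]; exact hx
  -- pointwise sign facts for the product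
  set F : ℝ → ℝ := fun x =>
    GFPL p0 p1 (fun _ => (k : ℝ) / 4) n x * GFPL p0 p1 (fun _ => (k : ℝ) / 4) m x with hF
  have key := gfpl_key p0 hp0ne p1 (dFun c h t) hp1 ((k : ℝ) / 4) hgpos
  have hFfact : ∀ x : ℝ, F x = (p0 ^ 2 / 4) *
      (((2 / p0) * GFPL p0 p1 (fun _ => (k : ℝ) / 4) n x) *
       ((2 / p0) * GFPL p0 p1 (fun _ => (k : ℝ) / 4) m x)) := by
    intro x; field_simp [hF]; ring
  have hp0sq : (0 : ℝ) < p0 ^ 2 / 4 := by positivity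
  have hFnonneg : ∀ x : ℝ, 0 ≤ F x := by
    intro x
    rw [hFfact x]
    rcases Nat.even_or_odd n with hne | hno
    · have hn2 : n % 2 = 0 := Nat.even_iff.mp hne
      have hm2 : m % 2 = 0 := by omega
      have h1 := (key x n).1 hn2
      have h2 := (key x m).1 hm2
      positivity
    · have hn2 : n % 2 = 1 := Nat.odd_iff.mp hno
      have hm2 : m % 2 = 1 := by omega
      obtain ⟨q1, hq1, he1⟩ := (key x n).2 hn2
      obtain ⟨q2, hq2, he2⟩ := (key x m).2 hm2
      rw [he1, he2]
      have : dFun c h t x * q1 * (dFun c h t x * q2) = (dFun c h t x) ^ 2 * (q1 * q2) := by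
        ring
      rw [this]
      positivity
  have hFpos : ∀ x : ℝ, dFun c h t x ≠ 0 → 0 < F x := by
    intro x hx
    rw [hFfact x]
    rcases Nat.even_or_odd n with hne | hno
    · have hn2 : n % 2 = 0 := Nat.even_iff.mp hne
      have hm2 : m % 2 = 0 := by omega
      have h1 := (key x n).1 hn2
      have h2 := (key x m).1 hm2
      positivity
    · have hn2 : n % 2 = 1 := Nat.odd_iff.mp hno
      have hm2 : m % 2 = 1 := by omega
      obtain ⟨q1, hq1, he1⟩ := (key x n).2 hn2
      obtain ⟨q2, hq2, he2⟩ := (key x m).2 hm2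
      rw [he1, he2]
      have : dFun c h t x * q1 * (dFun c h t x * q2) = (dFun c h t x) ^ 2 * (q1 * q2) := by
        ring
      rw [this]
      have h2 : 0 < (dFun c h t x) ^ 2 := by positivity
      positivity
  -- the integrand
  set f : ℝ → ℝ := fun x => F x / w x with hfdef
  have hle : -a ≤ a := by linarith
  have hfcont : ContinuousOn f (Set.Icc (-a) a) := by
    exact ((hLncont.mul hLmcont).continuousOn).div hw.continuousOn
      (fun x hx => (hwpos x hx).ne')
  have hfint : IntervalIntegrable f MeasureTheory.volume (-a) a := by
    apply ContinuousOn.intervalIntegrable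
    rwa [Set.uIcc_of_le hle]
  have hIoc : ∀ x ∈ Set.Ioc (-a) a, x ∈ Set.Icc (-a) a := fun x hx =>
    Set.Ioc_subset_Icc_self hx
  have hfnonneg : ∀ x ∈ Set.Ioc (-a) a, 0 ≤ f x := by
    intro x hx
    exact div_nonneg (hFnonneg x) (hwpos x (hIoc x hx)).le
  have hfposon : ∀ x ∈ Set.Ioc (-a) a, dFun c h t x ≠ 0 → 0 < f x := by
    intro x hx hdx
    exact div_pos (hFpos x hdx) (hwpos x (hIoc x hx))
  rw [intervalIntegral.integral_of_le hle]
  have hpos : 0 < ∫ x in Set.Ioc (-a) a, f x := by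
    rw [MeasureTheory.setIntegral_pos_iff_support_of_nonneg_ae
      (MeasureTheory.ae_restrict_of_forall_mem measurableSet_Ioc hfnonneg)
      (hfint.1)]
    have hsub : Set.Ioc (-a) a \ {x : ℝ | dFun c h t x = 0} ⊆
        Function.support f ∩ Set.Ioc (-a) a := by
      intro x hx
      exact ⟨(hfposon x hx.1 hx.2).ne', hx.1⟩
    calc (0 : ENNReal) < MeasureTheory.volume (Set.Ioc (-a) a \ {x : ℝ | dFun c h t x = 0}) := by
          rw [MeasureTheory.measure_diff_null (hZfin.measure_zero _)]
          simp only [Real.volume_Ioc]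
          rw [ENNReal.ofReal_pos]
          linarith
      _ ≤ MeasureTheory.volume (Function.support f ∩ Set.Ioc (-a) a) :=
          MeasureTheory.measure_mono hsub
  exact ⟨hpos, hpos.ne'⟩
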